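/- Let K₁, K₂ be compact Hausdorff spaces and (ν_γ)_{γ∈Γ} a net of Borel probability measures on K₁ × K₂ all having the same marginal distributions (μ₁, μ₂). If for i = 1, 2 the family Σ_i ⊆ Bor(K_i) is Δ-dense in Bor(K_i) with respect to μ_i and the limit lim_γ ν_γ(E₁ × E₂) exists for all E₁ ∈ Σ₁, E₂ ∈ Σ₂, then lim_γ ν_γ(A₁ × A₂) exists for all Borel A₁ ⊆ K₁, A₂ ⊆ K₂. -/

import Mathlib

open MeasureTheory Filter

lemma symmDiff_prod_subset {K₁ K₂ : Type*} (A₁ E₁ : Set K₁) (A₂ E₂ : Set K₂) :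
    symmDiff (A₁ ×ˢ A₂) (E₁ ×ˢ E₂) ⊆
      (symmDiff A₁ E₁) ×ˢ (Set.univ : Set K₂) ∪ (Set.univ : Set K₁) ×ˢ (symmDiff A₂ E₂) := by
  intro x hx
  simp only [Set.mem_union, Set.mem_prod, Set.mem_univ, and_true, true_and,
    Set.mem_symmDiff, Set.mem_prod] at hx ⊢
  tauto

/-- Lemma on nets of measures on a product with fixed marginals: if `Σᵢ` is
`Δ`-dense in `Bor(Kᵢ)` w.r.t. `μᵢ` and `lim_γ ν_γ(E₁ × E₂)` exists for all
`E₁ ∈ Σ₁`, `E₂ ∈ Σ₂`, then `lim_γ ν_γ(A₁ × A₂)` exists for all Borel `A₁, A₂`. -/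
theorem stmt4 {K₁ K₂ : Type*}
    [TopologicalSpace K₁] [CompactSpace K₁] [T2Space K₁] [MeasurableSpace K₁] [BorelSpace K₁]
    [TopologicalSpace K₂] [CompactSpace K₂] [T2Space K₂] [MeasurableSpace K₂] [BorelSpace K₂]
    {Γ : Type*} [Preorder Γ] [Nonempty Γ] [IsDirected Γ (· ≤ ·)]
    (ν : Γ → Measure (K₁ × K₂)) (hprob : ∀ γ, IsProbabilityMeasure (ν γ))
    (μ₁ : Measure K₁) (μ₂ : Measure K₂)
    (hm₁ : ∀ γ, ∀ A : Set K₁, MeasurableSet A → ν γ (A ×ˢ Set.univ) = μ₁ A)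
    (hm₂ : ∀ γ, ∀ B : Set K₂, MeasurableSet B → ν γ (Set.univ ×ˢ B) = μ₂ B)
    (S₁ : Set (Set K₁)) (S₂ : Set (Set K₂))
    (hS₁ : ∀ E ∈ S₁, MeasurableSet E) (hS₂ : ∀ E ∈ S₂, MeasurableSet E)
    (hd₁ : ∀ A : Set K₁, MeasurableSet A → ∀ ε : ENNReal, 0 < ε →
      ∃ E ∈ S₁, μ₁ (symmDiff A E) < ε)
    (hd₂ : ∀ B : Set K₂, MeasurableSet B → ∀ ε : ENNReal, 0 < ε →
      ∃ E ∈ S₂, μ₂ (symmDiff B E) < ε)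
    (hlim : ∀ E₁ ∈ S₁, ∀ E₂ ∈ S₂,
      ∃ l : ℝ, Tendsto (fun γ => (ν γ (E₁ ×ˢ E₂)).toReal) atTop (nhds l)) :
    ∀ A₁ : Set K₁, MeasurableSet A₁ → ∀ A₂ : Set K₂, MeasurableSet A₂ →
      ∃ l : ℝ, Tendsto (fun γ => (ν γ (A₁ ×ˢ A₂)).toReal) atTop (nhds l) := by
  intro A₁ hA₁ A₂ hA₂
  set f : Γ → ℝ := fun γ => (ν γ (A₁ ×ˢ A₂)).toReal with hf
  -- key approximation: for E₁ ∈ S₁, E₂ ∈ S₂, for every γ,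
  -- |f γ - (ν γ (E₁ ×ˢ E₂)).toReal| ≤ (μ₁ (A₁ Δ E₁)).toReal + (μ₂ (A₂ Δ E₂)).toReal
  have key : ∀ E₁ ∈ S₁, ∀ E₂ ∈ S₂, ∀ γ,
      |f γ - (ν γ (E₁ ×ˢ E₂)).toReal| ≤
        (μ₁ (symmDiff A₁ E₁)).toReal + (μ₂ (symmDiff A₂ E₂)).toReal := by
    intro E₁ hE₁ E₂ hE₂ γ
    have := hprob γ
    have h1 : |f γ - (ν γ (E₁ ×ˢ E₂)).toReal| ≤
        (ν γ (symmDiff (A₁ ×ˢ A₂) (E₁ ×ˢ E₂))).toReal :=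
      abs_measureReal_sub_le_measureReal_symmDiff (hA₁.prod hA₂).nullMeasurableSet
        ((hS₁ E₁ hE₁).prod (hS₂ E₂ hE₂)).nullMeasurableSet
    refine h1.trans ?_
    have h2 : ν γ (symmDiff (A₁ ×ˢ A₂) (E₁ ×ˢ E₂)) ≤
        ν γ ((symmDiff A₁ E₁) ×ˢ (Set.univ : Set K₂)) +
        ν γ ((Set.univ : Set K₁) ×ˢ (symmDiff A₂ E₂)) :=
      le_trans (measure_mono (symmDiff_prod_subset A₁ E₁ A₂ E₂)) (measure_union_le _ _)
    rw [hm₁ γ _ (hA₁.symmDiff (hS₁ E₁ hE₁)), hm₂ γ _ (hA₂.symmDiff (hS₂ E₂ hE₂))] at h2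
    have hμ1 : μ₁ (symmDiff A₁ E₁) ≠ ⊤ := by
      rw [← hm₁ (Classical.arbitrary Γ) _ (hA₁.symmDiff (hS₁ E₁ hE₁))]
      exact measure_ne_top _ _
    have hμ2 : μ₂ (symmDiff A₂ E₂) ≠ ⊤ := by
      rw [← hm₂ (Classical.arbitrary Γ) _ (hA₂.symmDiff (hS₂ E₂ hE₂))]
      exact measure_ne_top _ _
    calc (ν γ (symmDiff (A₁ ×ˢ A₂) (E₁ ×ˢ E₂))).toReal
        ≤ (μ₁ (symmDiff A₁ E₁) + μ₂ (symmDiff A₂ E₂)).toReal :=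
          ENNReal.toReal_mono (ENNReal.add_ne_top.2 ⟨hμ1, hμ2⟩) h2
      _ = (μ₁ (symmDiff A₁ E₁)).toReal + (μ₂ (symmDiff A₂ E₂)).toReal :=
          ENNReal.toReal_add hμ1 hμ2
  -- show the map filter is Cauchy
  have hcauchy : Cauchy (map f atTop) := by
    rw [Metric.cauchy_iff]
    refine ⟨map_neBot, ?_⟩
    intro ε hε
    obtain ⟨E₁, hE₁, hμE₁⟩ := hd₁ A₁ hA₁ (ENNReal.ofReal (ε / 6))
      (ENNReal.ofReal_pos.2 (by linarith))
    obtain ⟨E₂, hE₂, hμE₂⟩ := hd₂ A₂ hA₂ (ENNReal.ofReal (ε / 6))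
      (ENNReal.ofReal_pos.2 (by linarith))
    obtain ⟨l, hl⟩ := hlim E₁ hE₁ E₂ hE₂
    have hμE₁' : (μ₁ (symmDiff A₁ E₁)).toReal < ε / 6 := ENNReal.toReal_lt_of_lt_ofReal hμE₁
    have hμE₂' : (μ₂ (symmDiff A₂ E₂)).toReal < ε / 6 := ENNReal.toReal_lt_of_lt_ofReal hμE₂
    have := Metric.tendsto_nhds.1 hl (ε / 6) (by linarith)
    rw [eventually_atTop] at this
    obtain ⟨γ₀, hγ₀⟩ := this
    refine ⟨f '' {γ | γ₀ ≤ γ}, image_mem_map (mem_atTop γ₀), ?_⟩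
    rintro _ ⟨γ, hγ, rfl⟩ _ ⟨γ', hγ', rfl⟩
    have k1 := key E₁ hE₁ E₂ hE₂ γ
    have k2 := key E₁ hE₁ E₂ hE₂ γ'
    have d1 := hγ₀ γ hγ
    have d2 := hγ₀ γ' hγ'
    rw [Real.dist_eq] at d1 d2 ⊢
    have : |f γ - f γ'| ≤ |f γ - (ν γ (E₁ ×ˢ E₂)).toReal| +
        |(ν γ (E₁ ×ˢ E₂)).toReal - l| + |l - (ν γ' (E₁ ×ˢ E₂)).toReal| +
        |(ν γ' (E₁ ×ˢ E₂)).toReal - f γ'| := by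
      have := abs_sub_le (f γ) ((ν γ (E₁ ×ˢ E₂)).toReal) (f γ')
      have h2 := abs_sub_le ((ν γ (E₁ ×ˢ E₂)).toReal) l (f γ')
      have h3 := abs_sub_le l ((ν γ' (E₁ ×ˢ E₂)).toReal) (f γ')
      linarith
    rw [abs_sub_comm l] at this
    rw [abs_sub_comm] at k2
    calc |f γ - f γ'| ≤ _ := this
      _ < ε := by linarith
  obtain ⟨l, hl⟩ := CompleteSpace.complete hcauchy
  exact ⟨l, hl⟩
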